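/- arXiv:1305.6198 — 2 statements merged into one kernel-verified Lean document; each statement's English description precedes it below -/
import Mathlib

section
/- Let A : (α, β) → ℝ^{N×N} have locally integrable entries with A(t) an ML-matrix for each t, and let x(t) be a Carathéodory solution of x' = A(t)x with all coordinates of x(t₀) strictly positive. Then for a.e. t, the derivative of ∑ᵢ ln xᵢ(t) is at least tr A(t) + 2 ∑_{j<k} √(a_{jk}(t) a_{kj}(t)). -/
open MeasureTheory Set Filter Topology


lemma slope_est {g : ℝ → ℝ} (hg : Integrable g volume) (c a b g₀ : ℝ) (hab : a < b) :
    |((∫ s in c..b, g s) - ∫ s in c..a, g s) - (b - a) * g₀|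
      ≤ ∫ s in Icc a b, |g s - g₀| := by
  have hI : ∀ u v : ℝ, IntervalIntegrable g volume u v :=
    fun u v => hg.integrableOn.intervalIntegrable
  have h1 : (∫ s in c..b, g s) - ∫ s in c..a, g s = ∫ s in a..b, g s := by
    rw [← intervalIntegral.integral_add_adjacent_intervals (hI c a) (hI a b)]; ring
  have h2 : (b - a) * g₀ = ∫ s in a..b, g₀ := by
    simp [intervalIntegral.integral_const, smul_eq_mul]
  rw [h1, h2, ← intervalIntegral.integral_sub (hI a b) intervalIntegrable_const]
  have := intervalIntegral.norm_integral_le_integral_norm (μ := volume)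
      (f := fun s => g s - g₀) hab.le
  simp only [Real.norm_eq_abs] at this
  refine this.trans (le_of_eq ?_)
  rw [intervalIntegral.integral_of_le hab.le, ← integral_Icc_eq_integral_Ioc]

lemma ae_hasDerivAt_primitive {g : ℝ → ℝ} (hg : Integrable g volume) (c : ℝ) :
    ∀ᵐ t ∂(volume : Measure ℝ), HasDerivAt (fun u => ∫ s in c..u, g s) (g t) t := by
  set v := IsUnifLocDoublingMeasure.vitaliFamily (volume : Measure ℝ) 1 with hv
  filter_upwards [v.ae_tendsto_average_norm_sub hg.locallyIntegrable] with t ht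
  rw [hasDerivAt_iff_tendsto_slope, ← nhdsLT_sup_nhdsGT, tendsto_sup]
  have havg : ∀ a b : ℝ, a < b →
      ⨍ y in Icc a b, |g y - g t| = (b - a)⁻¹ * ∫ s in Icc a b, |g s - g t| := by
    intro a b hab
    rw [setAverage_eq, Real.volume_real_Icc_of_le (by linarith), smul_eq_mul]
  constructor
  · -- left limit
    have hL := ht.comp (Real.tendsto_Icc_vitaliFamily_left t)
    rw [tendsto_iff_dist_tendsto_zero]
    refine squeeze_zero' (.of_forall fun y => dist_nonneg) ?_ (by simpa [Function.comp] using hL)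
    filter_upwards [self_mem_nhdsWithin] with y (hy : y < t)
    have h := slope_est hg c y t (g t) hy
    simp only [Function.comp_apply]
    rw [Real.dist_eq, havg y t hy]
    rw [slope_def_field, div_sub' (by intro h'; exact absurd (sub_eq_zero.mp h') (by linarith)), abs_div]
    rw [abs_of_neg (by linarith : y - t < 0)]
    rw [div_le_iff₀ (by linarith)]
    have hne : t - y ≠ 0 := by linarith
    have hI : ((t - y)⁻¹ * ∫ s in Icc y t, |g s - g t|) * -(y - t)
        = ∫ s in Icc y t, |g s - g t| := by
      rw [neg_sub, mul_comm ((t - y)⁻¹), mul_assoc, inv_mul_cancel₀ hne, mul_one]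
    rw [hI]
    have heq : ((∫ s in c..y, g s) - ∫ s in c..t, g s) - (y - t) * g t
        = -((((∫ s in c..t, g s) - ∫ s in c..y, g s)) - (t - y) * g t) := by ring
    rw [heq, abs_neg]
    exact h
  · have hR := ht.comp (Real.tendsto_Icc_vitaliFamily_right t)
    rw [tendsto_iff_dist_tendsto_zero]
    refine squeeze_zero' (.of_forall fun y => dist_nonneg) ?_ (by simpa [Function.comp] using hR)
    filter_upwards [self_mem_nhdsWithin] with y (hy : t < y)
    have h := slope_est hg c t y (g t) hy
    simp only [Function.comp_apply]
    rw [Real.dist_eq, havg t y hy]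
    rw [slope_def_field, div_sub' (by intro h'; exact absurd (sub_eq_zero.mp h') (by linarith)), abs_div]
    rw [abs_of_pos (by linarith : (0:ℝ) < y - t)]
    rw [div_le_iff₀ (by linarith)]
    have hne : y - t ≠ 0 := by linarith
    have hI : ((y - t)⁻¹ * ∫ s in Icc t y, |g s - g t|) * (y - t)
        = ∫ s in Icc t y, |g s - g t| := by
      rw [mul_comm ((y - t)⁻¹), mul_assoc, inv_mul_cancel₀ hne, mul_one]
    rw [hI]
    exact h


lemma mul_cont_integrableOn {f φ : ℝ → ℝ} {K : Set ℝ} (hK : IsCompact K)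
    (hf : IntegrableOn f K volume) (hφ : ContinuousOn φ K) :
    IntegrableOn (fun s => f s * φ s) K volume := by
  obtain ⟨C, hC⟩ := hK.exists_bound_of_continuousOn hφ
  have h := Integrable.bdd_mul (c := C) hf (hφ.aestronglyMeasurable hK.measurableSet)
    (by filter_upwards [ae_restrict_mem hK.measurableSet] with s hs using hC s hs)
  exact h.congr (Filter.Eventually.of_forall fun s => mul_comm _ _)

lemma gIntegrableOn {N : ℕ} {α β : ℝ}
    (A : ℝ → Matrix (Fin N) (Fin N) ℝ)
    (hint : ∀ i j, MeasureTheory.LocallyIntegrableOn (fun t => A t i j) (Set.Ioo α β))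
    (x : ℝ → Fin N → ℝ)
    (hcont : ∀ i, ContinuousOn (fun t => x t i) (Set.Ioo α β))
    {K : Set ℝ} (hK : IsCompact K) (hKs : K ⊆ Set.Ioo α β) (i : Fin N) :
    IntegrableOn (fun τ => ∑ j, A τ i j * x τ j) K volume := by
  apply MeasureTheory.integrable_finset_sum
  intro j _
  exact mul_cont_integrableOn hK ((hint i j).integrableOn_compact_subset hKs hK)
    ((hcont j).mono hKs)

lemma pos_forward {N : ℕ} {α β t₀ : ℝ} (ht₀ : t₀ ∈ Set.Ioo α β)
    (A : ℝ → Matrix (Fin N) (Fin N) ℝ)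
    (hint : ∀ i j, MeasureTheory.LocallyIntegrableOn (fun t => A t i j) (Set.Ioo α β))
    (hML : ∀ t ∈ Set.Ioo α β, ∀ i j, i ≠ j → 0 ≤ A t i j)
    (x : ℝ → Fin N → ℝ)
    (hcont : ∀ i, ContinuousOn (fun t => x t i) (Set.Ioo α β))
    (hsol : ∀ t ∈ Set.Ioo α β, ∀ i,
      x t i = x t₀ i + ∫ τ in t₀..t, ∑ j, A τ i j * x τ j)
    (hpos : ∀ i, 0 < x t₀ i) :
    ∀ t ∈ Set.Ico t₀ β, ∀ i, 0 < x t i := by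
  by_contra hcon
  push_neg at hcon
  obtain ⟨t₁, ht₁, i₁, hle⟩ := hcon
  have hαt₀ := ht₀.1
  have ht₀t₁ : t₀ < t₁ := by
    rcases eq_or_lt_of_le ht₁.1 with h | h
    · exact absurd hle (by rw [← h]; exact not_le.2 (hpos i₁))
    · exact h
  have hIccsub : Set.Icc t₀ t₁ ⊆ Set.Ioo α β :=
    fun s hs => ⟨lt_of_lt_of_le hαt₀ hs.1, lt_of_le_of_lt hs.2 ht₁.2⟩
  set S : Set ℝ := {t ∈ Set.Icc t₀ t₁ | ∃ i, x t i ≤ 0} with hSdef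
  have hSne : S.Nonempty := ⟨t₁, ⟨ht₀t₁.le, le_refl _⟩, i₁, hle⟩
  have hSbdd : BddBelow S := ⟨t₀, fun s hs => hs.1.1⟩
  have hSclosed : IsClosed S := by
    have hSeq : S = ⋃ i : Fin N, (Set.Icc t₀ t₁ ∩ (fun t => x t i) ⁻¹' Set.Iic 0) := by
      ext t
      simp only [hSdef, Set.mem_setOf_eq, Set.mem_iUnion, Set.mem_inter_iff, Set.mem_preimage,
        Set.mem_Iic]
      tauto
    rw [hSeq]
    exact isClosed_iUnion_of_finite fun i =>
      ContinuousOn.preimage_isClosed_of_isClosed ((hcont i).mono hIccsub) isClosed_Icc isClosed_Iic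
  set τ := sInf S with hτdef
  have hτS : τ ∈ S := hSclosed.csInf_mem hSne hSbdd
  obtain ⟨hτIcc, i₀, hτ0⟩ := hτS
  have hτIoo : τ ∈ Set.Ioo α β := hIccsub hτIcc
  have ht₀τ : t₀ < τ := by
    rcases eq_or_lt_of_le hτIcc.1 with h | h
    · exfalso; rw [← h] at hτ0; exact absurd hτ0 (not_le.2 (hpos i₀))
    · exact h
  have hsub : Set.Icc t₀ τ ⊆ Set.Ioo α β :=
    (Set.Icc_subset_Icc le_rfl hτIcc.2).trans hIccsub
  have hposlt : ∀ t, t₀ ≤ t → t < τ → ∀ i, 0 < x t i := by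
    intro t h1 h2 i
    by_contra hneg
    have hmem : t ∈ S := ⟨⟨h1, h2.le.trans hτIcc.2⟩, i, not_lt.1 hneg⟩
    exact absurd (csInf_le hSbdd hmem) (not_le.2 h2)
  have hnn : ∀ t ∈ Set.Icc t₀ τ, ∀ i, 0 ≤ x t i := by
    intro t ht i
    rcases lt_or_eq_of_le ht.2 with h | h
    · exact (hposlt t ht.1 h i).le
    · by_contra hneg
      push_neg at hneg
      have ht₀t : t₀ < t := h ▸ ht₀τ
      have hC : ContinuousAt (fun s => x s i) t :=
        (hcont i).continuousAt (Ioo_mem_nhds (hsub ht).1 (hsub ht).2)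
      have hev : ∀ᶠ s in 𝓝[<] t, x s i < 0 :=
        eventually_nhdsWithin_of_eventually_nhds (hC (Iio_mem_nhds hneg))
      have hev2 : Set.Ioo t₀ t ∈ 𝓝[<] t := Ioo_mem_nhdsLT_of_mem ⟨ht₀t, le_refl t⟩
      obtain ⟨s, hs1, hs2⟩ := (hev.and hev2).exists
      exact absurd hs1 (not_lt.2 (hposlt s hs2.1.le (h ▸ hs2.2) i).le)
  -- interval integrability helpers on Icc t₀ τ
  have hsubIcc : ∀ {a b : ℝ}, a ∈ Set.Icc t₀ τ → b ∈ Set.Icc t₀ τ →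
      Set.uIcc a b ⊆ Set.Icc t₀ τ := by
    intro a b ha hb
    have : Set.uIcc a b ⊆ Set.uIcc t₀ τ := by
      apply Set.uIcc_subset_uIcc <;> rw [Set.uIcc_of_le ht₀τ.le] <;> assumption
    rwa [Set.uIcc_of_le ht₀τ.le] at this
  have hgII : ∀ {a b : ℝ}, a ∈ Set.Icc t₀ τ → b ∈ Set.Icc t₀ τ →
      IntervalIntegrable (fun s => ∑ j, A s i₀ j * x s j) volume a b := by
    intro a b ha hb
    exact (gIntegrableOn A hint x hcont isCompact_uIcc ((hsubIcc ha hb).trans hsub)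
      i₀).intervalIntegrable
  have haint : IntegrableOn (fun s => A s i₀ i₀) (Set.Icc t₀ τ) volume :=
    (hint i₀ i₀).integrableOn_compact_subset hsub isCompact_Icc
  have hwint : IntegrableOn (fun s => |A s i₀ i₀|) (Set.Icc t₀ τ) volume := haint.abs
  have haxII : ∀ {a b : ℝ}, a ∈ Set.Icc t₀ τ → b ∈ Set.Icc t₀ τ →
      IntervalIntegrable (fun s => A s i₀ i₀ * x s i₀) volume a b := by
    intro a b ha hb
    exact (mul_cont_integrableOn isCompact_Icc haint
      ((hcont i₀).mono hsub)).mono_set (hsubIcc ha hb) |>.intervalIntegrable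
  have hwxII : ∀ {a b : ℝ}, a ∈ Set.Icc t₀ τ → b ∈ Set.Icc t₀ τ →
      IntervalIntegrable (fun s => |A s i₀ i₀| * x s i₀) volume a b := by
    intro a b ha hb
    exact (mul_cont_integrableOn isCompact_Icc hwint
      ((hcont i₀).mono hsub)).mono_set (hsubIcc ha hb) |>.intervalIntegrable
  have hwII : ∀ {a b : ℝ}, a ∈ Set.Icc t₀ τ → b ∈ Set.Icc t₀ τ →
      IntervalIntegrable (fun s => |A s i₀ i₀|) volume a b := by
    intro a b ha hb
    exact (hwint.mono_set (hsubIcc ha hb)).intervalIntegrable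
  have ht₀mem : t₀ ∈ Set.Icc t₀ τ := ⟨le_refl _, ht₀τ.le⟩
  have hτmem : τ ∈ Set.Icc t₀ τ := ⟨ht₀τ.le, le_refl _⟩
  -- key Gronwall-type inequality
  have key : ∀ t ∈ Set.Icc t₀ τ, x t i₀ ≤ ∫ s in t..τ, |A s i₀ i₀| * x s i₀ := by
    intro t ht
    have htI : t ∈ Set.Ioo α β := hsub ht
    have h1 : x τ i₀ - x t i₀ = ∫ s in t..τ, ∑ j, A s i₀ j * x s j := by
      have e1 := hsol t htI i₀
      have e2 := hsol τ hτIoo i₀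
      have hadd := intervalIntegral.integral_add_adjacent_intervals
        (hgII ht₀mem ht) (hgII ht hτmem)
      rw [e1, e2]
      linarith [hadd]
    have h2 : ∫ s in t..τ, A s i₀ i₀ * x s i₀ ≤ ∫ s in t..τ, ∑ j, A s i₀ j * x s j := by
      apply intervalIntegral.integral_mono_on ht.2 (haxII ht hτmem) (hgII ht hτmem)
      intro s hs
      have hsmem : s ∈ Set.Icc t₀ τ := ⟨ht.1.trans hs.1, hs.2⟩
      have hsum : A s i₀ i₀ * x s i₀ + ∑ j ∈ Finset.univ.erase i₀, A s i₀ j * x s j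
          = ∑ j, A s i₀ j * x s j :=
        Finset.add_sum_erase Finset.univ (fun j => A s i₀ j * x s j) (Finset.mem_univ i₀)
      have hnonneg : 0 ≤ ∑ j ∈ Finset.univ.erase i₀, A s i₀ j * x s j := by
        apply Finset.sum_nonneg
        intro j hj
        exact mul_nonneg (hML s (hsub hsmem) i₀ j (Finset.ne_of_mem_erase hj).symm)
          (hnn s hsmem j)
      linarith
    have h3 : -(∫ s in t..τ, |A s i₀ i₀| * x s i₀) ≤ ∫ s in t..τ, A s i₀ i₀ * x s i₀ := by
      rw [← intervalIntegral.integral_neg]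
      apply intervalIntegral.integral_mono_on ht.2 ((hwxII ht hτmem).neg) (haxII ht hτmem)
      intro s hs
      have hsmem : s ∈ Set.Icc t₀ τ := ⟨ht.1.trans hs.1, hs.2⟩
      have := mul_le_mul_of_nonneg_right (neg_abs_le (A s i₀ i₀)) (hnn s hsmem i₀)
      simpa [neg_mul] using this
    linarith
  have hxτ0 : x τ i₀ = 0 := le_antisymm hτ0 (hnn τ hτmem i₀)
  set T : Set ℝ := {t ∈ Set.Icc t₀ τ | ∀ s ∈ Set.Icc t τ, x s i₀ = 0} with hTdef
  have hτT : τ ∈ T := ⟨hτmem, fun s hs => by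
    have : s = τ := le_antisymm hs.2 hs.1
    rw [this]; exact hxτ0⟩
  have hTne : T.Nonempty := ⟨τ, hτT⟩
  have hTbdd : BddBelow T := ⟨t₀, fun s hs => hs.1.1⟩
  set u := sInf T with hudef
  have hut₀ : t₀ ≤ u := le_csInf hTne fun s hs => hs.1.1
  have huτ : u ≤ τ := csInf_le hTbdd hτT
  have humem : u ∈ Set.Icc t₀ τ := ⟨hut₀, huτ⟩
  have huzero : ∀ s ∈ Set.Icc u τ, x s i₀ = 0 := by
    intro s hs
    rcases lt_or_eq_of_le hs.1 with h | h
    · obtain ⟨tT, htT, hlt⟩ := (csInf_lt_iff hTbdd hTne).1 h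
      exact htT.2 s ⟨hlt.le, hs.2⟩
    · -- s = u (h : u = s)
      rcases lt_or_eq_of_le hs.2 with h2 | h2
      · -- u = s < τ : right limit of zeros
        have hsIoo : s ∈ Set.Ioo α β := hsub ⟨h ▸ hut₀, hs.2⟩
        have hC : Tendsto (fun r => x r i₀) (𝓝[>] s) (𝓝 (x s i₀)) :=
          (((hcont i₀).continuousAt (Ioo_mem_nhds hsIoo.1 hsIoo.2)).continuousWithinAt)
        have hzero_right : ∀ᶠ r in 𝓝[>] s, x r i₀ = 0 := by
          filter_upwards [Ioc_mem_nhdsGT_of_mem ⟨le_refl s, h2⟩] with r hr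
          obtain ⟨tT, htT, hlt⟩ := (csInf_lt_iff hTbdd hTne).1 (h ▸ hr.1 : u < r)
          exact htT.2 r ⟨hlt.le, hr.2⟩
        have h0 : Tendsto (fun r => x r i₀) (𝓝[>] s) (𝓝 0) :=
          Tendsto.congr' (hzero_right.mono fun r hr => hr.symm) tendsto_const_nhds
        exact tendsto_nhds_unique hC h0
      · rw [h2]; exact hxτ0
  have hu_eq : u = t₀ := by
    by_contra hne
    have ht₀u : t₀ < u := lt_of_le_of_ne hut₀ (Ne.symm hne)
    set F : ℝ → ℝ := fun r => ∫ s in t₀..r, |A s i₀ i₀| with hFdef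
    have hFcont : ContinuousOn F (Set.Icc t₀ τ) := by
      have := intervalIntegral.continuousOn_primitive_interval
        (a := t₀) (b := τ) (μ := volume) (f := fun s => |A s i₀ i₀|)
        (by rwa [Set.uIcc_of_le ht₀τ.le])
      rwa [Set.uIcc_of_le ht₀τ.le] at this
    have hCu := (hFcont u humem)
    rw [Metric.continuousWithinAt_iff] at hCu
    obtain ⟨δ, hδpos, hδprop⟩ := hCu (1/2) (by norm_num)
    set t₂ := max t₀ (u - δ/2) with ht₂def
    have ht₂u : t₂ < u := max_lt ht₀u (by linarith)
    have ht₂t₀ : t₀ ≤ t₂ := le_max_left _ _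
    have ht₂mem : t₂ ∈ Set.Icc t₀ τ := ⟨ht₂t₀, ht₂u.le.trans huτ⟩
    have hdist : dist t₂ u < δ := by
      rw [Real.dist_eq, abs_of_neg (by linarith : t₂ - u < 0)]
      have : u - δ/2 ≤ t₂ := le_max_right _ _
      linarith
    have hsmall : ∫ s in t₂..u, |A s i₀ i₀| < 1/2 := by
      have hd := hδprop ht₂mem hdist
      have hsplit := intervalIntegral.integral_add_adjacent_intervals
        (hwII ht₀mem ht₂mem) (hwII ht₂mem humem)
      rw [Real.dist_eq] at hd
      have habs := abs_lt.1 hd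
      simp only [hFdef] at habs
      linarith [habs.1, habs.2, hsplit]
    obtain ⟨m, hm, hmax⟩ := (isCompact_Icc (a := t₂) (b := u)).exists_isMaxOn
      (Set.nonempty_Icc.2 ht₂u.le) ((hcont i₀).mono
        ((Set.Icc_subset_Icc ht₂t₀ huτ).trans hsub))
    set M := x m i₀ with hMdef
    have hmmem : m ∈ Set.Icc t₀ τ := ⟨ht₂t₀.trans hm.1, hm.2.trans huτ⟩
    have hM0 : 0 ≤ M := hnn m hmmem i₀
    have hchain : ∀ t ∈ Set.Icc t₂ u, x t i₀ ≤ M * ∫ s in t₂..u, |A s i₀ i₀| := by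
      intro t ht
      have htmem : t ∈ Set.Icc t₀ τ := ⟨ht₂t₀.trans ht.1, ht.2.trans huτ⟩
      have hk := key t htmem
      -- ∫ t..τ = ∫ t..u + ∫ u..τ, and ∫ u..τ (w x) = 0
      have hzero : ∫ s in u..τ, |A s i₀ i₀| * x s i₀ = 0 := by
        rw [intervalIntegral.integral_congr (g := fun _ => (0:ℝ))
          (fun s hs => by
            rw [Set.uIcc_of_le huτ] at hs
            simp [huzero s hs])]
        simp
      have hsplit := intervalIntegral.integral_add_adjacent_intervals
        (hwxII htmem humem) (hwxII humem hτmem)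
      have h1 : x t i₀ ≤ ∫ s in t..u, |A s i₀ i₀| * x s i₀ := by
        rw [hzero] at hsplit
        linarith [hk, hsplit]
      have h2 : ∫ s in t..u, |A s i₀ i₀| * x s i₀ ≤ ∫ s in t..u, |A s i₀ i₀| * M := by
        apply intervalIntegral.integral_mono_on (ht.2) (hwxII htmem humem)
          (((hwint.mono_set (hsubIcc htmem humem)).intervalIntegrable).mul_const M)
        intro s hs
        have hsIcc : s ∈ Set.Icc t₂ u := ⟨ht.1.trans hs.1, hs.2⟩
        exact mul_le_mul_of_nonneg_left (hmax hsIcc) (abs_nonneg _)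
      have h3 : ∫ s in t..u, |A s i₀ i₀| * M = (∫ s in t..u, |A s i₀ i₀|) * M := by
        rw [← intervalIntegral.integral_mul_const]
      have h4 : ∫ s in t..u, |A s i₀ i₀| ≤ ∫ s in t₂..u, |A s i₀ i₀| := by
        have hsplit2 := intervalIntegral.integral_add_adjacent_intervals
          (hwII ht₂mem htmem) (hwII htmem humem)
        have : 0 ≤ ∫ s in t₂..t, |A s i₀ i₀| :=
          intervalIntegral.integral_nonneg ht.1 (fun s _ => abs_nonneg _)
        linarith
      calc x t i₀ ≤ ∫ s in t..u, |A s i₀ i₀| * x s i₀ := h1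
        _ ≤ (∫ s in t..u, |A s i₀ i₀|) * M := by rw [← h3]; exact h2
        _ ≤ (∫ s in t₂..u, |A s i₀ i₀|) * M := by
            apply mul_le_mul_of_nonneg_right h4 hM0
        _ = M * ∫ s in t₂..u, |A s i₀ i₀| := mul_comm _ _
    have hM_le : M ≤ M * ∫ s in t₂..u, |A s i₀ i₀| := hchain m hm
    have hIw0 : 0 ≤ ∫ s in t₂..u, |A s i₀ i₀| :=
      intervalIntegral.integral_nonneg ht₂u.le (fun s _ => abs_nonneg _)
    have hM_zero : M = 0 := by nlinarith
    have ht₂T : t₂ ∈ T := by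
      refine ⟨ht₂mem, fun s hs => ?_⟩
      rcases le_or_gt s u with h | h
      · have hsIcc : s ∈ Set.Icc t₂ u := ⟨hs.1, h⟩
        have := hchain s hsIcc
        rw [hM_zero] at this
        have h0 := hnn s ⟨ht₂t₀.trans hs.1, hs.2⟩ i₀
        linarith [this]
      · exact huzero s ⟨h.le, hs.2⟩
    exact absurd (csInf_le hTbdd ht₂T) (not_le.2 ht₂u)
  have : x t₀ i₀ = 0 := huzero t₀ (hu_eq ▸ ⟨le_refl u, huτ⟩)
  exact absurd this (ne_of_gt (hpos i₀))


lemma two_sqrt_le {u v : ℝ} (hu : 0 ≤ u) (hv : 0 ≤ v) : 2 * Real.sqrt (u * v) ≤ u + v := by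
  have h1 : Real.sqrt (u * v) ≤ (u + v) / 2 := by
    rw [show (u + v)/2 = Real.sqrt (((u + v)/2)^2) from (Real.sqrt_sq (by linarith)).symm]
    exact Real.sqrt_le_sqrt (by nlinarith [sq_nonneg (u - v)])
  linarith

lemma sum_ratio_ineq {N : ℕ} (a : Matrix (Fin N) (Fin N) ℝ) (y : Fin N → ℝ)
    (hy : ∀ i, 0 < y i) (hML : ∀ i j, i ≠ j → 0 ≤ a i j) :
    ∑ i, (∑ j, a i j * y j) / y i ≥ Matrix.trace a +
      2 * ∑ p ∈ Finset.univ.filter (fun p : Fin N × Fin N => p.1 < p.2),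
        Real.sqrt (a p.1 p.2 * a p.2 p.1) := by
  set f : Fin N → Fin N → ℝ := fun i j => a i j * y j / y i with hf
  have step1 : ∑ i, (∑ j, a i j * y j) / y i = ∑ p : Fin N × Fin N, f p.1 p.2 := by
    rw [← Finset.univ_product_univ, Finset.sum_product']
    congr 1
    ext i
    rw [Finset.sum_div]
  have hsplit1 := Finset.sum_filter_add_sum_filter_not Finset.univ
    (fun p : Fin N × Fin N => p.1 = p.2) (fun p => f p.1 p.2)
  have hdiag : ∑ p ∈ Finset.univ.filter (fun p : Fin N × Fin N => p.1 = p.2), f p.1 p.2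
      = ∑ i, a i i := by
    refine Finset.sum_nbij' (fun p => p.1) (fun i => (i, i)) ?_ ?_ ?_ ?_ ?_
    · intro p _; exact Finset.mem_univ _
    · intro i _; simp
    · intro p hp
      simp only [Finset.mem_filter] at hp
      exact Prod.ext rfl hp.2
    · intro i _; rfl
    · intro p hp
      simp only [Finset.mem_filter] at hp
      rw [hf]
      simp only
      rw [← hp.2, mul_div_assoc, div_self (ne_of_gt (hy p.1)), mul_one]
  have hsplit2 := Finset.sum_filter_add_sum_filter_not
    (Finset.univ.filter fun p : Fin N × Fin N => p.1 ≠ p.2)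
    (fun p => p.1 < p.2) (fun p => f p.1 p.2)
  have e1 : (Finset.univ.filter fun p : Fin N × Fin N => p.1 ≠ p.2).filter
      (fun p => p.1 < p.2) = Finset.univ.filter (fun p : Fin N × Fin N => p.1 < p.2) := by
    ext p
    simp only [Finset.mem_filter, Finset.mem_univ, true_and]
    exact ⟨fun h => h.2, fun h => ⟨ne_of_lt h, h⟩⟩
  have e2 : (Finset.univ.filter fun p : Fin N × Fin N => p.1 ≠ p.2).filter
      (fun p => ¬ p.1 < p.2) = Finset.univ.filter (fun p : Fin N × Fin N => p.2 < p.1) := by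
    ext p
    simp only [Finset.mem_filter, Finset.mem_univ, true_and, not_lt]
    constructor
    · rintro ⟨h1, h2⟩; exact lt_of_le_of_ne h2 h1.symm
    · intro h; exact ⟨(ne_of_lt h).symm, h.le⟩
  have hswap : ∑ p ∈ Finset.univ.filter (fun p : Fin N × Fin N => p.2 < p.1), f p.1 p.2
      = ∑ p ∈ Finset.univ.filter (fun p : Fin N × Fin N => p.1 < p.2), f p.2 p.1 := by
    refine Finset.sum_nbij' Prod.swap Prod.swap ?_ ?_ ?_ ?_ ?_ <;>
      simp [Finset.mem_filter]
  have hineq : ∑ p ∈ Finset.univ.filter (fun p : Fin N × Fin N => p.1 < p.2),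
      (f p.1 p.2 + f p.2 p.1)
      ≥ ∑ p ∈ Finset.univ.filter (fun p : Fin N × Fin N => p.1 < p.2),
        2 * Real.sqrt (a p.1 p.2 * a p.2 p.1) := by
    apply Finset.sum_le_sum
    intro p hp
    simp only [Finset.mem_filter] at hp
    have hne : p.1 ≠ p.2 := ne_of_lt hp.2
    have hu : 0 ≤ f p.1 p.2 :=
      div_nonneg (mul_nonneg (hML _ _ hne) (hy p.2).le) (hy p.1).le
    have hv : 0 ≤ f p.2 p.1 :=
      div_nonneg (mul_nonneg (hML _ _ hne.symm) (hy p.1).le) (hy p.2).le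
    have huv : f p.1 p.2 * f p.2 p.1 = a p.1 p.2 * a p.2 p.1 := by
      have h1 : y p.1 ≠ 0 := ne_of_gt (hy p.1)
      have h2 : y p.2 ≠ 0 := ne_of_gt (hy p.2)
      rw [hf]
      simp only
      field_simp
    calc 2 * Real.sqrt (a p.1 p.2 * a p.2 p.1)
        = 2 * Real.sqrt (f p.1 p.2 * f p.2 p.1) := by rw [huv]
      _ ≤ f p.1 p.2 + f p.2 p.1 := two_sqrt_le hu hv
  have htr : Matrix.trace a = ∑ i, a i i := by
    simp [Matrix.trace, Matrix.diag]
  rw [ge_iff_le, step1, ← hsplit1, ← hsplit2, e1, e2, hswap, htr,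
    ← Finset.sum_add_distrib, Finset.mul_sum]
  have := hineq
  rw [ge_iff_le] at this
  linarith [hdiag ▸ le_refl (∑ p ∈ Finset.univ.filter (fun p : Fin N × Fin N => p.1 = p.2), f p.1 p.2)]

lemma uIcc_subset_Icc' {a b c d : ℝ} (hcd : c ≤ d) (ha : a ∈ Set.Icc c d)
    (hb : b ∈ Set.Icc c d) : Set.uIcc a b ⊆ Set.Icc c d := by
  have h := Set.uIcc_subset_uIcc (a₁ := a) (b₁ := b) (a₂ := c) (b₂ := d)
    (by rwa [Set.uIcc_of_le hcd]) (by rwa [Set.uIcc_of_le hcd])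
  rwa [Set.uIcc_of_le hcd] at h

/-- A.e. differential inequality for `∑ᵢ ln xᵢ` along cooperative linear ODE systems. -/
theorem stmt3 {N : ℕ} {α β t₀ : ℝ} (ht₀ : t₀ ∈ Set.Ioo α β)
    (A : ℝ → Matrix (Fin N) (Fin N) ℝ)
    (hint : ∀ i j, MeasureTheory.LocallyIntegrableOn (fun t => A t i j) (Set.Ioo α β))
    (hML : ∀ t ∈ Set.Ioo α β, ∀ i j, i ≠ j → 0 ≤ A t i j)
    (x : ℝ → Fin N → ℝ)
    (hcont : ∀ i, ContinuousOn (fun t => x t i) (Set.Ioo α β))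
    (hsol : ∀ t ∈ Set.Ioo α β, ∀ i,
      x t i = x t₀ i + ∫ τ in t₀..t, ∑ j, A τ i j * x τ j)
    (hpos : ∀ i, 0 < x t₀ i) :
    ∀ᵐ t ∂(MeasureTheory.volume.restrict (Set.Ioo t₀ β)),
      ∃ d : ℝ, HasDerivAt (fun s => ∑ i, Real.log (x s i)) d t ∧
        d ≥ Matrix.trace (A t) +
          2 * ∑ p ∈ Finset.univ.filter (fun p : Fin N × Fin N => p.1 < p.2),
            Real.sqrt (A t p.1 p.2 * A t p.2 p.1) := by
  have hαt₀ := ht₀.1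
  have ht₀β := ht₀.2
  rw [MeasureTheory.ae_restrict_iff' measurableSet_Ioo]
  have main : ∀ d, t₀ < d → d < β →
      ∀ᵐ t ∂(volume : Measure ℝ), t ∈ Set.Ioo t₀ d →
        (∃ dd : ℝ, HasDerivAt (fun s => ∑ i, Real.log (x s i)) dd t ∧
          dd ≥ Matrix.trace (A t) +
            2 * ∑ p ∈ Finset.univ.filter (fun p : Fin N × Fin N => p.1 < p.2),
              Real.sqrt (A t p.1 p.2 * A t p.2 p.1)) := by
    intro d hd1 hd2
    set c := (α + t₀) / 2 with hc
    have hc1 : α < c := by rw [hc]; linarith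
    have hc2 : c < t₀ := by rw [hc]; linarith
    have hcd : c ≤ d := by linarith
    have hKsub : Set.Icc c d ⊆ Set.Ioo α β :=
      fun s hs => ⟨lt_of_lt_of_le hc1 hs.1, lt_of_le_of_lt hs.2 hd2⟩
    set g : Fin N → ℝ → ℝ := fun i τ => ∑ j, A τ i j * x τ j with hgdef
    have hgint : ∀ i, IntegrableOn (g i) (Set.Icc c d) volume := fun i =>
      gIntegrableOn A hint x hcont isCompact_Icc hKsub i
    set G : Fin N → ℝ → ℝ := fun i => (Set.Icc c d).indicator (g i) with hGdef
    have hGint : ∀ i, Integrable (G i) volume := fun i =>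
      (hgint i).integrable_indicator measurableSet_Icc
    have hgII : ∀ (i : Fin N) (a b : ℝ), a ∈ Set.Icc c d → b ∈ Set.Icc c d →
        IntervalIntegrable (g i) volume a b := fun i a b ha hb =>
      ((hgint i).mono_set (uIcc_subset_Icc' hcd ha hb)).intervalIntegrable
    filter_upwards [ae_all_iff.2 fun i => ae_hasDerivAt_primitive (hGint i) c] with t ht htmem
    have htIoo : t ∈ Set.Ioo α β := ⟨lt_trans hαt₀ htmem.1, lt_trans htmem.2 hd2⟩
    have htcd : t ∈ Set.Ioo c d := ⟨lt_trans hc2 htmem.1, htmem.2⟩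
    have ht₀mem : t₀ ∈ Set.Icc c d := ⟨hc2.le, hd1.le⟩
    have hcmem : c ∈ Set.Icc c d := ⟨le_refl _, hcd⟩
    have hxder : ∀ i, HasDerivAt (fun u => x u i) (g i t) t := by
      intro i
      have h1 := ht i
      have hev : (fun u => (x t₀ i + ∫ s in t₀..c, g i s) + ∫ s in c..u, G i s)
          =ᶠ[nhds t] (fun u => x u i) := by
        filter_upwards [Ioo_mem_nhds htcd.1 htcd.2] with u hu
        have humem : u ∈ Set.Icc c d := ⟨hu.1.le, hu.2.le⟩
        have huIoo : u ∈ Set.Ioo α β := hKsub humem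
        have hGg : ∫ s in c..u, G i s = ∫ s in c..u, g i s := by
          apply intervalIntegral.integral_congr
          intro s hs
          exact Set.indicator_of_mem (uIcc_subset_Icc' hcd hcmem humem hs) _
        have hadd := intervalIntegral.integral_add_adjacent_intervals
          (hgII i t₀ c ht₀mem hcmem) (hgII i c u hcmem humem)
        rw [hGg, hsol u huIoo i]
        have : (∫ τ in t₀..u, ∑ j, A τ i j * x τ j) = ∫ s in t₀..u, g i s := rfl
        rw [this]
        linarith [hadd]
      have h2 : HasDerivAt
          (fun u => (x t₀ i + ∫ s in t₀..c, g i s) + ∫ s in c..u, G i s) (G i t) t :=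
        HasDerivAt.const_add _ h1
      have h3 := (hev.hasDerivAt_iff).1 h2
      have hGt : G i t = g i t :=
        Set.indicator_of_mem (show t ∈ Set.Icc c d from ⟨htcd.1.le, htcd.2.le⟩) _
      rwa [hGt] at h3
    have hxpos : ∀ i, 0 < x t i :=
      pos_forward ht₀ A hint hML x hcont hsol hpos t ⟨htmem.1.le, lt_trans htmem.2 hd2⟩
    refine ⟨∑ i, g i t / x t i, ?_, ?_⟩
    · exact HasDerivAt.fun_sum fun i _ => (hxder i).log (ne_of_gt (hxpos i))
    · exact sum_ratio_ineq (A t) (x t) hxpos (fun i j hij => hML t htIoo i j hij)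
  have hseq : ∀ n : ℕ, t₀ < β - (β - t₀) / ((n : ℝ) + 2) ∧ β - (β - t₀) / ((n : ℝ) + 2) < β := by
    intro n
    have h2 : (0 : ℝ) < (n : ℝ) + 2 := by positivity
    have hβt₀ : (0 : ℝ) < β - t₀ := by linarith
    constructor
    · have : (β - t₀) / ((n : ℝ) + 2) < β - t₀ := by
        rw [div_lt_iff₀ h2]
        nlinarith
      linarith
    · have : 0 < (β - t₀) / ((n : ℝ) + 2) := by positivity
      linarith
  filter_upwards [ae_all_iff.2 fun n : ℕ =>
    main (β - (β - t₀) / ((n : ℝ) + 2)) (hseq n).1 (hseq n).2] with t ht htmem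
  obtain ⟨n, hn⟩ : ∃ n : ℕ, t < β - (β - t₀) / ((n : ℝ) + 2) := by
    have hβt : 0 < β - t := by linarith [htmem.2]
    obtain ⟨n, hn⟩ := exists_nat_gt ((β - t₀) / (β - t))
    refine ⟨n, ?_⟩
    have h2 : (0 : ℝ) < (n : ℝ) + 2 := by positivity
    have h3 : β - t₀ < (n : ℝ) * (β - t) := (div_lt_iff₀ hβt).1 hn
    have : (β - t₀) / ((n : ℝ) + 2) < β - t := by
      rw [div_lt_iff₀ h2]
      nlinarith
    linarith
  exact ht n ⟨htmem.1, hn⟩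
end

section
/- Let A ∈ ℝ^{N×N} be an ML-matrix. Then its dominant eigenvalue d(A) satisfies d(A) ≥ minⱼ ∑ᵢ a_{ij} (the minimum over columns of the column sums). -/
open scoped NNReal ENNReal
open Filter

attribute [local instance] Matrix.linftyOpNormedRing Matrix.linftyOpNormedAlgebra
  Matrix.linfty_opNormOneClass

section aux

variable {N : ℕ} [NeZero N]

lemma row_sum_le_norm (M : Matrix (Fin N) (Fin N) ℂ) (i : Fin N) :
    ∑ j, ‖M i j‖ ≤ ‖M‖ := by
  rw [Matrix.linfty_opNorm_def]
  have h : (∑ j, ‖M i j‖₊) ≤ Finset.univ.sup fun i => ∑ j, ‖M i j‖₊ :=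
    Finset.le_sup (f := fun i => ∑ j, ‖M i j‖₊) (Finset.mem_univ i)
  calc ∑ j, ‖M i j‖ = ((∑ j, ‖M i j‖₊ : ℝ≥0) : ℝ) := by push_cast; rfl
    _ ≤ _ := NNReal.coe_le_coe.mpr h

lemma spectrum_shift (M : Matrix (Fin N) (Fin N) ℂ) (c μ : ℂ) :
    μ ∈ spectrum ℂ (M + c • 1) ↔ μ - c ∈ spectrum ℂ M := by
  rw [spectrum.mem_iff, spectrum.mem_iff]
  congr! 2
  rw [Algebra.algebraMap_eq_smul_one, Algebra.algebraMap_eq_smul_one, sub_smul]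
  abel

set_option maxHeartbeats 1000000 in
lemma key {N : ℕ} [NeZero N] (B : Matrix (Fin N) (Fin N) ℝ) (hB : ∀ i j, 0 ≤ B i j)
    (t : ℝ) (ht : 0 ≤ t) (hcol : ∀ j, t ≤ ∑ i, B i j) :
    ∃ μ ∈ spectrum ℂ (B.map (fun r => (r : ℂ))), t ≤ ‖μ‖ := by
  set Bc : Matrix (Fin N) (Fin N) ℂ := B.map (fun r => (r : ℂ)) with hBc
  -- powers are entrywise nonneg
  have hpow_nonneg : ∀ k i j, 0 ≤ (B ^ k) i j := by
    intro k
    induction k with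
    | zero => intro i j; by_cases h : i = j <;> simp [Matrix.one_apply, h]
    | succ k ih =>
      intro i j
      rw [pow_succ', Matrix.mul_apply]
      exact Finset.sum_nonneg fun l _ => mul_nonneg (hB i l) (ih l j)
  have hpow_col : ∀ k j, t ^ k ≤ ∑ i, (B ^ k) i j := by
    intro k
    induction k with
    | zero => intro j; simp [Matrix.one_apply]
    | succ k ih =>
      intro j
      have : ∑ i, (B ^ (k + 1)) i j = ∑ l, (∑ i, B i l) * (B ^ k) l j := by
        simp only [pow_succ', Matrix.mul_apply, Finset.sum_mul]
        rw [Finset.sum_comm]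
      rw [this, pow_succ']
      calc t * t ^ k ≤ t * ∑ l, (B ^ k) l j := by
            exact mul_le_mul_of_nonneg_left (ih j) ht
        _ = ∑ l, t * (B ^ k) l j := by rw [Finset.mul_sum]
        _ ≤ ∑ l, (∑ i, B i l) * (B ^ k) l j :=
            Finset.sum_le_sum fun l _ =>
              mul_le_mul_of_nonneg_right (hcol l) (hpow_nonneg k l j)
  -- norm of powers lower bound
  have hmap_pow : ∀ k : ℕ, Bc ^ k = (B ^ k).map (fun r => (r : ℂ)) := by
    intro k
    induction k with
    | zero =>
      simp only [pow_zero]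
      exact (Matrix.map_one _ Complex.ofReal_zero Complex.ofReal_one).symm
    | succ k ih =>
      rw [pow_succ, pow_succ, ih, hBc]
      exact (Matrix.map_mul (L := B ^ k) (M := B) (f := Complex.ofRealHom)).symm
  have hnorm : ∀ k : ℕ, t ^ k ≤ ‖Bc ^ k‖ := by
    intro k
    have htotal : (N : ℝ) * t ^ k ≤ ∑ i, ∑ j, (B ^ k) i j := by
      rw [show ∑ i, ∑ j, (B ^ k) i j = ∑ j, ∑ i, (B ^ k) i j from Finset.sum_comm]
      calc (N : ℝ) * t ^ k = ∑ _j : Fin N, t ^ k := by simp [mul_comm]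
        _ ≤ ∑ j, ∑ i, (B ^ k) i j := Finset.sum_le_sum fun j _ => hpow_col k j
    obtain ⟨i, _, hi⟩ := Finset.exists_le_of_sum_le (s := Finset.univ)
      (f := fun _ : Fin N => t ^ k) (g := fun i => ∑ j, (B ^ k) i j)
      Finset.univ_nonempty (by simpa [mul_comm] using htotal)
    calc t ^ k ≤ ∑ j, (B ^ k) i j := hi
      _ = ∑ j, ‖((B ^ k) i j : ℂ)‖ := by
          refine Finset.sum_congr rfl fun j _ => ?_
          rw [Complex.norm_real, Real.norm_eq_abs, abs_of_nonneg (hpow_nonneg k i j)]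
      _ = ∑ j, ‖((B ^ k).map (fun r => (r : ℂ))) i j‖ := rfl
      _ ≤ ‖(B ^ k).map (fun r => (r : ℂ))‖ := row_sum_le_norm _ i
      _ = ‖Bc ^ k‖ := by rw [hmap_pow]
  -- Gelfand
  set T : ℝ≥0 := ⟨t, ht⟩ with hT
  have hgel := spectrum.pow_nnnorm_pow_one_div_tendsto_nhds_spectralRadius Bc
  have hsr : (T : ℝ≥0∞) ≤ spectralRadius ℂ Bc := by
    refine ge_of_tendsto hgel ?_
    filter_upwards [eventually_ge_atTop 1] with n hn
    have h1 : (T : ℝ≥0∞) ^ (n : ℕ) ≤ (‖Bc ^ n‖₊ : ℝ≥0∞) := by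
      rw [← ENNReal.coe_pow, ENNReal.coe_le_coe, ← NNReal.coe_le_coe]
      push_cast
      exact hnorm n
    have h2 := ENNReal.rpow_le_rpow h1 (by positivity : (0:ℝ) ≤ 1 / (n:ℝ))
    have hn0 : (n : ℝ) ≠ 0 := by positivity
    calc (T : ℝ≥0∞) = ((T : ℝ≥0∞) ^ (n : ℕ)) ^ (1 / (n : ℝ)) := by
          rw [← ENNReal.rpow_natCast, ← ENNReal.rpow_mul, mul_one_div_cancel hn0,
            ENNReal.rpow_one]
      _ ≤ (‖Bc ^ n‖₊ : ℝ≥0∞) ^ (1 / (n : ℝ)) := h2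
  -- attainment
  have hne : (spectrum ℂ Bc).Nonempty := spectrum.nonempty Bc
  obtain ⟨μ, hμ, hmax⟩ := (spectrum.isCompact Bc).exists_isMaxOn hne
    (continuous_norm.continuousOn)
  refine ⟨μ, hμ, ?_⟩
  have hle : spectralRadius ℂ Bc ≤ (‖μ‖₊ : ℝ≥0∞) := by
    rw [spectralRadius]
    refine iSup₂_le fun k hk => ?_
    exact_mod_cast ENNReal.coe_le_coe.mpr (by exact_mod_cast hmax hk)
  have := hsr.trans hle
  exact_mod_cast ENNReal.coe_le_coe.mp this

end aux

/-- Frobenius lower estimate (column version): `d(A) ≥ minⱼ ∑ᵢ a_{ij}` for an ML-matrix. -/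
theorem stmt6 {N : ℕ} [NeZero N] (A : Matrix (Fin N) (Fin N) ℝ)
    (hML : ∀ i j, i ≠ j → 0 ≤ A i j) (d : ℝ)
    (hd : (d : ℂ) ∈ spectrum ℂ (A.map (fun r => (r : ℂ))))
    (hdom : ∀ μ ∈ spectrum ℂ (A.map (fun r => (r : ℂ))), μ.re ≤ d) :
    d ≥ ⨅ j, ∑ i, A i j := by
  classical
  set Ac : Matrix (Fin N) (Fin N) ℂ := A.map (fun r => (r : ℂ)) with hAc
  set s : ℝ := ⨅ j, ∑ i, A i j with hs
  set R : ℝ := ‖Ac‖ with hR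
  have hR0 : (0 : ℝ) ≤ R := norm_nonneg _
  have hsle : ∀ j, s ≤ ∑ i, A i j := fun j =>
    ciInf_le (Set.Finite.bddBelow (Set.finite_range _)) j
  have hrow : ∀ i, ∑ j, |A i j| ≤ R := by
    intro i
    have := row_sum_le_norm Ac i
    calc ∑ j, |A i j| = ∑ j, ‖Ac i j‖ := by
          refine Finset.sum_congr rfl fun j _ => ?_
          rw [hAc, Matrix.map_apply, Complex.norm_real, Real.norm_eq_abs]
      _ ≤ R := this
  have hdiag : ∀ i, |A i i| ≤ R := by
    intro i
    refine le_trans ?_ (hrow i)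
    exact Finset.single_le_sum (f := fun j => |A i j|) (fun j _ => abs_nonneg _)
      (Finset.mem_univ i)
  have hmain : ∀ c : ℝ, R + |d| + |s| + 1 ≤ c → (s + c) ^ 2 ≤ (d + c) ^ 2 + R ^ 2 := by
    intro c hc
    have hds : (0:ℝ) ≤ |d| := abs_nonneg _
    have hss : (0:ℝ) ≤ |s| := abs_nonneg _
    set B : Matrix (Fin N) (Fin N) ℝ := A + c • (1 : Matrix (Fin N) (Fin N) ℝ) with hB
    have hBij : ∀ i j, 0 ≤ B i j := by
      intro i j
      by_cases h : i = j
      · subst h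
        have h1 : B i i = A i i + c := by
          simp [hB, Matrix.add_apply, Matrix.smul_apply, Matrix.one_apply]
        have := hdiag i
        rw [h1]
        cases abs_le.mp this with
        | intro h2 h3 => linarith
      · have h1 : B i j = A i j := by
          simp [hB, Matrix.add_apply, Matrix.smul_apply, Matrix.one_apply, h]
        rw [h1]; exact hML i j h
    have hsc : 0 ≤ s + c := by
      cases abs_le.mp (le_refl |s|) with
      | intro h2 h3 => linarith [neg_abs_le s]
    have hcolB : ∀ j, s + c ≤ ∑ i, B i j := by
      intro j
      have : ∑ i, B i j = (∑ i, A i j) + c := by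
        simp only [hB, Matrix.add_apply, Matrix.smul_apply, Matrix.one_apply,
          Finset.sum_add_distrib]
        congr 1
        simp
      rw [this]
      linarith [hsle j]
    obtain ⟨μ, hμ, hμn⟩ := key B hBij (s + c) hsc hcolB
    have hBm : B.map (fun r => (r : ℂ)) = Ac + (c : ℂ) • 1 := by
      ext i j
      by_cases h : i = j <;>
        simp [hB, hAc, Matrix.map_apply, Matrix.add_apply, Matrix.smul_apply,
          Matrix.one_apply, h]
    rw [hBm, spectrum_shift] at hμ
    set lam : ℂ := μ - (c : ℂ) with hlam
    have h1 : lam.re ≤ d := hdom lam hμ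
    have h2 : ‖lam‖ ≤ R := spectrum.norm_le_norm_of_mem hμ
    have him : |lam.im| ≤ R := (Complex.abs_im_le_norm lam).trans h2
    have hre : |lam.re| ≤ R := (Complex.abs_re_le_norm lam).trans h2
    have hnorm2 : ‖μ‖ ^ 2 = (lam.re + c) ^ 2 + lam.im ^ 2 := by
      have hμeq : μ = lam + (c : ℂ) := by rw [hlam]; ring
      rw [hμeq, Complex.sq_norm, Complex.normSq_apply]
      simp [Complex.add_re, Complex.add_im]
      ring
    have e1 : (s + c) ^ 2 ≤ ‖μ‖ ^ 2 := by nlinarith [hμn, hsc]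
    have e2 : lam.im ^ 2 ≤ R ^ 2 := by nlinarith [him, abs_nonneg lam.im, neg_abs_le lam.im, le_abs_self lam.im]
    have e3 : 0 ≤ lam.re + c := by
      have := neg_abs_le lam.re
      linarith
    have e4 : (lam.re + c) ^ 2 ≤ (d + c) ^ 2 := by nlinarith [h1, e3]
    linarith [hnorm2 ▸ e1]
  by_contra hlt
  push_neg at hlt
  have hsd : 0 < s - d := by linarith
  set c : ℝ := max (R + |d| + |s| + 1) ((d ^ 2 + R ^ 2 - s ^ 2 + 1) / (2 * (s - d))) with hc
  have h := hmain c (le_max_left _ _)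
  have hc2 : (d ^ 2 + R ^ 2 - s ^ 2 + 1) / (2 * (s - d)) ≤ c := le_max_right _ _
  have hc3 := (div_le_iff₀ (by linarith : (0:ℝ) < 2 * (s - d))).mp hc2
  nlinarith [h, hc3]
end
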